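/- The infimal convolution of Lebesgue-continuous risk measures inherits continuity from above: if each ρ_a has the Lebesgue property and (X^n) ⊆ L^∞(P) decreases pointwise a.s. to X ∈ L^∞(P), then inf_n (□_{a∈A} ρ_a μ(da))(X^n) = (□_{a∈A} ρ_a μ(da))(X), assuming the value function is globally finite. -/

import Mathlib

open MeasureTheory
noncomputable section

variable {Ω A : Type*} [MeasurableSpace Ω] [MeasurableSpace A]

/-- An allocation `(X_a)_{a ∈ A}` is `𝒜`-measurable if all the pairings
`a ↦ E[X_a Y]`, `Y ∈ L¹(P)`, are measurable. -/
def AllocMeasurable (P : Measure Ω) [IsProbabilityMeasure P]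
    (f : A → Lp ℝ ⊤ P) : Prop :=
  ∀ Y : Lp ℝ 1 P, Measurable fun a => ∫ ω, f a ω * Y ω ∂P

/-- An `X`-feasible allocation: a measurable, Gelfand integrable family whose Gelfand
integral is `X` (characterized through all pairings with `L¹(P)`). -/
def IsAllocOf (P : Measure Ω) [IsProbabilityMeasure P] (μ : Measure A)
    (f : A → Lp ℝ ⊤ P) (X : Lp ℝ ⊤ P) : Prop :=
  AllocMeasurable P f ∧
    ∀ Y : Lp ℝ 1 P, Integrable (fun a => ∫ ω, f a ω * Y ω ∂P) μ ∧
      ∫ a, (∫ ω, f a ω * Y ω ∂P) ∂μ = ∫ ω, X ω * Y ω ∂P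

/-- The set of attained total risks `∫_A ρ_a(X_a) μ(da)` over `X`-feasible allocations
with integrable risk; the integral infimal convolution is its infimum. -/
def valSet (P : Measure Ω) [IsProbabilityMeasure P] (μ : Measure A)
    (ρ : A → Lp ℝ ⊤ P → ℝ) (X : Lp ℝ ⊤ P) : Set ℝ :=
  {r : ℝ | ∃ f : A → Lp ℝ ⊤ P, IsAllocOf P μ f X ∧
    Integrable (fun a => ρ a (f a)) μ ∧ r = ∫ a, ρ a (f a) ∂μ}

/-- The Lebesgue property: continuity along `L^∞`-bounded sequences converging in
probability. -/
def LebesgueProperty (P : Measure Ω) [IsProbabilityMeasure P]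
    (ρ : Lp ℝ ⊤ P → ℝ) : Prop :=
  ∀ (Xn : ℕ → Lp ℝ ⊤ P) (X : Lp ℝ ⊤ P), (∃ M : ℝ, ∀ n, ‖Xn n‖ ≤ M) →
    TendstoInMeasure P (fun n => ⇑(Xn n)) Filter.atTop ⇑X →
    Filter.Tendsto (fun n => ρ (Xn n)) Filter.atTop (nhds (ρ X))


lemma Linf_ae_le_norm (P : Measure Ω) [IsProbabilityMeasure P] (W : Lp ℝ ⊤ P) :
    ∀ᵐ ω ∂P, |W ω| ≤ ‖W‖ := by
  have h := ae_le_eLpNormEssSup (f := ⇑W) (μ := P)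
  have hne : eLpNormEssSup (⇑W) P ≠ ⊤ := by
    have := Lp.eLpNorm_ne_top W; rwa [eLpNorm_exponent_top] at this
  filter_upwards [h] with ω hω
  have h2 : ((‖W ω‖₊ : ENNReal)).toReal ≤ (eLpNormEssSup (⇑W) P).toReal :=
    ENNReal.toReal_mono hne hω
  simpa [Lp.norm_def, eLpNorm_exponent_top, Real.norm_eq_abs] using h2

lemma pairing_integrable (P : Measure Ω) [IsProbabilityMeasure P]
    (W : Lp ℝ ⊤ P) (Y : Lp ℝ 1 P) : Integrable (fun ω => W ω * Y ω) P :=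
  (L1.integrable_coeFn Y).bdd_mul (Lp.aestronglyMeasurable W)
    (by filter_upwards [Linf_ae_le_norm P W] with ω h; simpa [Real.norm_eq_abs] using h)

lemma pairing_add (P : Measure Ω) [IsProbabilityMeasure P]
    (W D : Lp ℝ ⊤ P) (Y : Lp ℝ 1 P) :
    ∫ ω, (W + D) ω * Y ω ∂P = (∫ ω, W ω * Y ω ∂P) + ∫ ω, D ω * Y ω ∂P := by
  rw [← integral_add (pairing_integrable P W Y) (pairing_integrable P D Y)]
  refine integral_congr_ae ?_
  filter_upwards [Lp.coeFn_add W D] with ω h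
  simp only [h, Pi.add_apply]; ring
lemma le_add_of_ae_nonneg (P : Measure Ω) [IsProbabilityMeasure P]
    (g D : Lp ℝ ⊤ P) (h : ∀ᵐ ω ∂P, 0 ≤ D ω) : g ≤ g + D := by
  rw [← Lp.coeFn_le]
  filter_upwards [Lp.coeFn_add g D, h] with ω h1 h2
  simp only [h1, Pi.add_apply]; linarith

lemma add_le_of_ae_nonpos (P : Measure Ω) [IsProbabilityMeasure P]
    (g D : Lp ℝ ⊤ P) (h : ∀ᵐ ω ∂P, D ω ≤ 0) : g + D ≤ g := by
  rw [← Lp.coeFn_le]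
  filter_upwards [Lp.coeFn_add g D, h] with ω h1 h2
  simp only [h1, Pi.add_apply]; linarith

lemma risk_le_shift (P : Measure Ω) [IsProbabilityMeasure P] (ρ1 : Lp ℝ ⊤ P → ℝ)
    (hmono : ∀ X Y : Lp ℝ ⊤ P, X ≤ Y → ρ1 X ≤ ρ1 Y)
    (hcash : ∀ (X : Lp ℝ ⊤ P) (c : ℝ), ρ1 (X + Lp.const ⊤ P c) = ρ1 X + c)
    (g D : Lp ℝ ⊤ P) : ρ1 (g + D) ≤ ρ1 g + ‖D‖ := by
  have hle : g + D ≤ g + Lp.const ⊤ P ‖D‖ := by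
    rw [← Lp.coeFn_le]
    filter_upwards [Lp.coeFn_add g D, Lp.coeFn_add g (Lp.const ⊤ P ‖D‖),
      Lp.coeFn_const ⊤ P ‖D‖, Linf_ae_le_norm P D] with ω h1 h2 h3 h4
    simp only [h1, h2, Pi.add_apply, h3, Function.const]
    have := abs_le.1 h4
    linarith [this.2]
  calc ρ1 (g + D) ≤ ρ1 (g + Lp.const ⊤ P ‖D‖) := hmono _ _ hle
    _ = ρ1 g + ‖D‖ := hcash g ‖D‖

lemma risk_ge_shift (P : Measure Ω) [IsProbabilityMeasure P] (ρ1 : Lp ℝ ⊤ P → ℝ)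
    (hmono : ∀ X Y : Lp ℝ ⊤ P, X ≤ Y → ρ1 X ≤ ρ1 Y)
    (hcash : ∀ (X : Lp ℝ ⊤ P) (c : ℝ), ρ1 (X + Lp.const ⊤ P c) = ρ1 X + c)
    (g D : Lp ℝ ⊤ P) : ρ1 g - ‖D‖ ≤ ρ1 (g + D) := by
  have h := risk_le_shift P ρ1 hmono hcash (g + D) (-D)
  rw [add_neg_cancel_right, norm_neg] at h
  linarith
lemma alloc_shift (P : Measure Ω) [IsProbabilityMeasure P]
    (μ : Measure A) [IsFiniteMeasure μ] (hc : (μ Set.univ).toReal ≠ 0)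
    {f : A → Lp ℝ ⊤ P} {W : Lp ℝ ⊤ P} (hf : IsAllocOf P μ f W) (Z : Lp ℝ ⊤ P) :
    IsAllocOf P μ (fun a => f a + (μ Set.univ).toReal⁻¹ • Z) (W + Z) := by
  set c : ℝ := (μ Set.univ).toReal with hcdef
  set D : Lp ℝ ⊤ P := c⁻¹ • Z with hD
  have hpt : ∀ (a : A) (Y : Lp ℝ 1 P),
      ∫ ω, (f a + D) ω * Y ω ∂P = (∫ ω, f a ω * Y ω ∂P) + ∫ ω, D ω * Y ω ∂P :=
    fun a Y => pairing_add P (f a) D Y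
  have hDZ : ∀ Y : Lp ℝ 1 P, ∫ ω, D ω * Y ω ∂P = c⁻¹ * ∫ ω, Z ω * Y ω ∂P := by
    intro Y
    rw [← integral_const_mul]
    refine integral_congr_ae ?_
    filter_upwards [Lp.coeFn_smul c⁻¹ Z] with ω h
    rw [hD]
    simp only [h, Pi.smul_apply, smul_eq_mul]; ring
  constructor
  · intro Y
    have : (fun a => ∫ ω, (f a + D) ω * Y ω ∂P)
        = fun a => (∫ ω, f a ω * Y ω ∂P) + ∫ ω, D ω * Y ω ∂P := funext fun a => hpt a Y
    rw [this]
    exact (hf.1 Y).add measurable_const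
  · intro Y
    have heq : (fun a => ∫ ω, (f a + D) ω * Y ω ∂P)
        = fun a => (∫ ω, f a ω * Y ω ∂P) + ∫ ω, D ω * Y ω ∂P := funext fun a => hpt a Y
    have hint : Integrable (fun a => ∫ ω, (f a + D) ω * Y ω ∂P) μ := by
      rw [heq]; exact (hf.2 Y).1.add (integrable_const _)
    refine ⟨hint, ?_⟩
    rw [heq, integral_add (hf.2 Y).1 (integrable_const _), (hf.2 Y).2, integral_const,
      pairing_add P W Z Y, hDZ Y, smul_eq_mul, measureReal_def, ← hcdef]
    field_simp

/-- if each `ρ_a` has the Lebesgue property and the integral infimal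
convolution is globally finite, then it is continuous from above: for a sequence
decreasing a.s. to `X`, `inf_n (□ ρ_a μ(da))(X^n) = (□ ρ_a μ(da))(X)`. -/
theorem integralInfConv_continuous_from_above
    (P : Measure Ω) [IsProbabilityMeasure P]
    (μ : Measure A) [IsFiniteMeasure μ]
    (ρ : A → Lp ℝ ⊤ P → ℝ)
    (hmono : ∀ a, ∀ X Y : Lp ℝ ⊤ P, X ≤ Y → ρ a X ≤ ρ a Y)
    (hcash : ∀ a, ∀ (X : Lp ℝ ⊤ P) (c : ℝ), ρ a (X + Lp.const ⊤ P c) = ρ a X + c)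
    (hfam : ∀ f : A → Lp ℝ ⊤ P, AllocMeasurable P f → Measurable fun a => ρ a (f a))
    (hleb : ∀ a, LebesgueProperty P (ρ a))
    (hfin : ∀ X : Lp ℝ ⊤ P, (valSet P μ ρ X).Nonempty ∧ BddBelow (valSet P μ ρ X))
    (Xn : ℕ → Lp ℝ ⊤ P) (X : Lp ℝ ⊤ P)
    (hdec : ∀ n, Xn (n + 1) ≤ Xn n)
    (hlim : ∀ᵐ ω ∂P, Filter.Tendsto (fun n => Xn n ω) Filter.atTop (nhds (X ω))) :
    (⨅ n, sInf (valSet P μ ρ (Xn n))) = sInf (valSet P μ ρ X) := by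
  classical
  -- the measure μ is nonzero
  have hc : (μ Set.univ).toReal ≠ 0 := by
    intro h0
    have hμ : μ = 0 := by
      rcases (ENNReal.toReal_eq_zero_iff _).1 h0 with h | h
      · exact Measure.measure_univ_eq_zero.1 h
      · exact absurd h (measure_ne_top μ _)
    obtain ⟨r, f, hf, -, -⟩ := (hfin (Lp.const ⊤ P (1 : ℝ))).1
    have h2 := (hf.2 (Lp.const 1 P (1 : ℝ))).2
    rw [hμ, integral_zero_measure] at h2
    have h3 : ∫ ω, (Lp.const ⊤ P (1 : ℝ)) ω * (Lp.const 1 P (1 : ℝ)) ω ∂P = 1 := by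
      rw [integral_congr_ae (g := fun _ => (1 : ℝ))]
      · simp
      · filter_upwards [Lp.coeFn_const ⊤ P (1 : ℝ), Lp.coeFn_const 1 P (1 : ℝ)] with ω u v
        simp [u, v]
    rw [h3] at h2
    norm_num at h2
  set c : ℝ := (μ Set.univ).toReal with hcdef
  have hcnn : 0 ≤ c⁻¹ := inv_nonneg.2 ENNReal.toReal_nonneg
  -- a.e. order and convergence facts
  have hdec' : ∀ᵐ ω ∂P, ∀ n, Xn (n + 1) ω ≤ Xn n ω :=
    ae_all_iff.2 fun n => (Lp.coeFn_le _ _).2 (hdec n)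
  have hgood : ∀ᵐ ω ∂P, (∀ n, X ω ≤ Xn n ω) ∧ (∀ n m, n ≤ m → Xn m ω ≤ Xn n ω) ∧
      Filter.Tendsto (fun n => Xn n ω) Filter.atTop (nhds (X ω)) := by
    filter_upwards [hdec', hlim] with ω h1 h2
    have hanti : Antitone fun n => Xn n ω := antitone_nat_of_succ_le h1
    exact ⟨fun n => le_of_tendsto h2 (Filter.eventually_atTop.2 ⟨n, fun m hm => hanti hm⟩),
      fun n m hnm => hanti hnm, h2⟩
  -- the shift sequence
  set D : ℕ → Lp ℝ ⊤ P := fun n => c⁻¹ • (Xn n - X) with hDdef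
  have hDcoe : ∀ n, ∀ᵐ ω ∂P, D n ω = c⁻¹ * (Xn n ω - X ω) := by
    intro n
    filter_upwards [Lp.coeFn_smul c⁻¹ (Xn n - X), Lp.coeFn_sub (Xn n) X] with ω u v
    have hD : D n = c⁻¹ • (Xn n - X) := rfl
    rw [hD, u, Pi.smul_apply, v, Pi.sub_apply, smul_eq_mul]
  have hDcoe' : ∀ᵐ ω ∂P, ∀ n, D n ω = c⁻¹ * (Xn n ω - X ω) := ae_all_iff.2 hDcoe
  have hDnonneg : ∀ n, ∀ᵐ ω ∂P, 0 ≤ D n ω := by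
    intro n
    filter_upwards [hDcoe n, hgood] with ω u hg
    rw [u]
    exact mul_nonneg hcnn (by linarith [hg.1 n])
  have hDnorm : ∀ n, ‖D n‖ ≤ ‖D 0‖ := by
    intro n
    refine Lp.norm_le_norm_of_ae_le ?_
    filter_upwards [hDcoe', hgood] with ω u hg
    rw [u n, u 0, Real.norm_eq_abs, Real.norm_eq_abs]
    have h1 : (0 : ℝ) ≤ Xn n ω - X ω := by linarith [hg.1 n]
    have h2 : Xn n ω - X ω ≤ Xn 0 ω - X ω := by linarith [hg.2.1 0 n (Nat.zero_le n)]
    rw [abs_of_nonneg (mul_nonneg hcnn h1), abs_of_nonneg (mul_nonneg hcnn (by linarith))]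
    exact mul_le_mul_of_nonneg_left h2 hcnn
  -- monotonicity: sInf valSet X ≤ sInf valSet (Xn n)
  have claim_mono : ∀ n, sInf (valSet P μ ρ X) ≤ sInf (valSet P μ ρ (Xn n)) := by
    intro n
    refine le_csInf (hfin (Xn n)).1 ?_
    rintro r ⟨f, hf, hint, rfl⟩
    set E : Lp ℝ ⊤ P := c⁻¹ • (X - Xn n) with hEdef
    have halloc : IsAllocOf P μ (fun a => f a + E) X := by
      have h := alloc_shift P μ hc hf (X - Xn n)
      have heq : Xn n + (X - Xn n) = X := by abel
      rw [heq] at h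
      exact h
    have hEnonpos : ∀ᵐ ω ∂P, E ω ≤ 0 := by
      filter_upwards [Lp.coeFn_smul c⁻¹ (X - Xn n), Lp.coeFn_sub X (Xn n), hgood] with ω u v hg
      have hE : E = c⁻¹ • (X - Xn n) := rfl
      rw [hE, u, Pi.smul_apply, v, Pi.sub_apply, smul_eq_mul]
      nlinarith [hg.1 n, hcnn]
    have hle : ∀ a, ρ a (f a + E) ≤ ρ a (f a) :=
      fun a => hmono a _ _ (add_le_of_ae_nonpos P (f a) E hEnonpos)
    have hge : ∀ a, ρ a (f a) - ‖E‖ ≤ ρ a (f a + E) :=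
      fun a => risk_ge_shift P (ρ a) (hmono a) (hcash a) (f a) E
    have hmeas : AEStronglyMeasurable (fun a => ρ a (f a + E)) μ :=
      (hfam _ halloc.1).aestronglyMeasurable
    have hintg : Integrable (fun a => ρ a (f a + E)) μ := by
      refine Integrable.mono' (hint.abs.add (integrable_const ‖E‖)) hmeas
        (Filter.Eventually.of_forall fun a => ?_)
      simp only [Pi.add_apply]
      rw [Real.norm_eq_abs, abs_le]
      constructor
      · have := hge a; have := neg_abs_le (ρ a (f a)); linarith
      · have := hle a; have := le_abs_self (ρ a (f a)); have := norm_nonneg E; linarith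
    have hmem : (∫ a, ρ a (f a + E) ∂μ) ∈ valSet P μ ρ X := ⟨_, halloc, hintg, rfl⟩
    calc sInf (valSet P μ ρ X) ≤ ∫ a, ρ a (f a + E) ∂μ := csInf_le (hfin X).2 hmem
      _ ≤ ∫ a, ρ a (f a) ∂μ := integral_mono hintg hint fun a => hle a
  have hlb : BddBelow (Set.range fun n => sInf (valSet P μ ρ (Xn n))) :=
    ⟨sInf (valSet P μ ρ X), by rintro _ ⟨n, rfl⟩; exact claim_mono n⟩
  refine le_antisymm ?_ (le_ciInf claim_mono)
  refine le_csInf (hfin X).1 ?_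
  rintro r ⟨f, hf, hint, rfl⟩
  -- shifted allocations for Xn n
  have halloc : ∀ n, IsAllocOf P μ (fun a => f a + D n) (Xn n) := by
    intro n
    have h := alloc_shift P μ hc hf (Xn n - X)
    have heq : X + (Xn n - X) = Xn n := by abel
    rw [heq] at h
    exact h
  have hlow : ∀ n a, ρ a (f a) ≤ ρ a (f a + D n) :=
    fun n a => hmono a _ _ (le_add_of_ae_nonneg P (f a) (D n) (hDnonneg n))
  have hup : ∀ n a, ρ a (f a + D n) ≤ ρ a (f a) + ‖D 0‖ := fun n a =>
    (risk_le_shift P (ρ a) (hmono a) (hcash a) (f a) (D n)).trans (by linarith [hDnorm n])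
  have habs : ∀ n a, |ρ a (f a + D n)| ≤ |ρ a (f a)| + ‖D 0‖ := by
    intro n a
    rw [abs_le]
    constructor
    · have := hlow n a; have := neg_abs_le (ρ a (f a)); have := norm_nonneg (D 0); linarith
    · have := hup n a; have := le_abs_self (ρ a (f a)); linarith
  have hmeas : ∀ n, AEStronglyMeasurable (fun a => ρ a (f a + D n)) μ :=
    fun n => (hfam _ (halloc n).1).aestronglyMeasurable
  have hintn : ∀ n, Integrable (fun a => ρ a (f a + D n)) μ := fun n =>
    Integrable.mono' (hint.abs.add (integrable_const _)) (hmeas n)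
      (Filter.Eventually.of_forall fun a => by
        simpa [Real.norm_eq_abs, Pi.add_apply] using habs n a)
  have hmem : ∀ n, (∫ a, ρ a (f a + D n) ∂μ) ∈ valSet P μ ρ (Xn n) :=
    fun n => ⟨_, halloc n, hintn n, rfl⟩
  -- pointwise convergence of risks via the Lebesgue property
  have hptlim : ∀ a, Filter.Tendsto (fun n => ρ a (f a + D n)) Filter.atTop
      (nhds (ρ a (f a))) := by
    intro a
    refine hleb a (fun n => f a + D n) (f a) ⟨‖f a‖ + ‖D 0‖, fun n =>
      (norm_add_le _ _).trans (by linarith [hDnorm n])⟩ ?_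
    refine tendstoInMeasure_of_tendsto_ae (fun n => Lp.aestronglyMeasurable _) ?_
    have hadd : ∀ᵐ ω ∂P, ∀ n, (f a + D n) ω = f a ω + c⁻¹ * (Xn n ω - X ω) := by
      refine ae_all_iff.2 fun n => ?_
      filter_upwards [Lp.coeFn_add (f a) (D n), hDcoe n] with ω u v
      rw [u]
      simp [v]
    filter_upwards [hadd, hgood] with ω h1 h2
    have ht : Filter.Tendsto (fun n => f a ω + c⁻¹ * (Xn n ω - X ω)) Filter.atTop
        (nhds (f a ω + c⁻¹ * (X ω - X ω))) :=
      tendsto_const_nhds.add (tendsto_const_nhds.mul (h2.2.2.sub tendsto_const_nhds))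
    simp only [sub_self, mul_zero, add_zero] at ht
    exact ht.congr fun n => (h1 n).symm
  -- dominated convergence
  have htend : Filter.Tendsto (fun n => ∫ a, ρ a (f a + D n) ∂μ) Filter.atTop
      (nhds (∫ a, ρ a (f a) ∂μ)) := by
    refine tendsto_integral_of_dominated_convergence (fun a => |ρ a (f a)| + ‖D 0‖)
      hmeas (hint.abs.add (integrable_const _))
      (fun n => Filter.Eventually.of_forall fun a => by
        simpa [Real.norm_eq_abs, Pi.add_apply] using habs n a)
      (Filter.Eventually.of_forall fun a => hptlim a)
  refine ge_of_tendsto htend (Filter.Eventually.of_forall fun n => ?_)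
  exact (ciInf_le hlb n).trans (csInf_le (hfin (Xn n)).2 (hmem n))
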